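/- arXiv:2303.00743 — 4 statements merged into one kernel-verified Lean document; each statement's English description precedes it below -/
import Mathlib

section
/- Let U, D_B(α) and the L²₀ boundary condition be as in the context. Fix α, B, k ∈ ℂ. If u : ℂ → ℂ² is smooth, not identically zero, satisfies the L²₀ boundary condition, and D_B(α)u + k·u = 0, then the function v(z) := (−u₂(−z), u₁(−z)) is smooth, not identically zero, satisfies the L²₀ boundary condition, and D_B(α)v − k·v = 0. (Hence the spectrum of D_B(α) on L²₀ is invariant under k ↦ −k.) -/
noncomputable section

open Complex ComplexConjugate

/-- ω = exp(2πi/3). -/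
def ω : ℂ := Complex.exp (2 * Real.pi * Complex.I / 3)

/-- The lattice Λ = ℤ + ωℤ. -/
def Lam : Set ℂ := {z : ℂ | ∃ m n : ℤ, z = (m : ℂ) + (n : ℂ) * ω}

/-- The dual lattice Λ* = (4πi/√3)Λ. -/
def LamS : Set ℂ :=
  {z : ℂ | ∃ m n : ℤ,
    z = 4 * (Real.pi : ℂ) * Complex.I / (Real.sqrt 3 : ℂ) * ((m : ℂ) + (n : ℂ) * ω)}

/-- ⟨z,w⟩ = Re (z ⬝ conj w). -/
def pairing (z w : ℂ) : ℝ := (z * conj w).re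

/-- K = 4π/3. -/
def Kpt : ℂ := 4 * (Real.pi : ℂ) / 3

/-- 2D_z̄ u = −i(∂ₓu + i∂9u), via the real Fréchet derivative. -/
def twoDbar (u : ℂ → ℂ) (z : ℂ) : ℂ :=
  -Complex.I * (fderiv ℝ u z 1 + Complex.I * fderiv ℝ u z Complex.I)

/-- The magnetic chiral Dirac operator D_B(α). -/
def DB (U : ℂ → ℂ) (α B : ℂ) (u : ℂ → ℂ × ℂ) (z : ℂ) : ℂ × ℂ :=
  (twoDbar (fun w => (u w).1) z + α * U z * (u z).2 + B * (u z).1,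
   α * U (-z) * (u z).1 + twoDbar (fun w => (u w).2) z - B * (u z).2)

/-- The chiral Dirac operator D(α) (no magnetic field). -/
def Dop (U : ℂ → ℂ) (α : ℂ) (u : ℂ → ℂ × ℂ) (z : ℂ) : ℂ × ℂ :=
  (twoDbar (fun w => (u w).1) z + α * U z * (u z).2,
   α * U (-z) * (u z).1 + twoDbar (fun w => (u w).2) z)

/-- The L²₀ boundary condition. -/
def BC (u : ℂ → ℂ × ℂ) : Prop :=
  ∀ γ ∈ Lam, ∀ z : ℂ,
    u (z + γ) = (Complex.exp (-Complex.I * (pairing γ Kpt : ℂ)) * (u z).1,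
                 Complex.exp (Complex.I * (pairing γ Kpt : ℂ)) * (u z).2)

/-- Hypotheses on the potential U. -/
def IsPotential (U : ℂ → ℂ) : Prop :=
  ContDiff ℝ (⊤ : ℕ∞) U ∧
  (∀ γ ∈ Lam, ∀ z : ℂ,
    U (z + γ) = Complex.exp (-2 * Complex.I * (pairing γ Kpt : ℂ)) * U z) ∧
  (∀ z : ℂ, U (ω * z) = ω * U z) ∧
  (∀ z : ℂ, conj (U (conj z)) = - U (-z))

lemma twoDbar_neg (g : ℂ → ℂ) (z : ℂ) :
    twoDbar (fun w => -(g w)) z = -(twoDbar g z) := by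
  unfold twoDbar
  rw [fderiv_fun_neg]
  simp
  ring

lemma twoDbar_comp_neg (g : ℂ → ℂ) (z : ℂ) (hg : DifferentiableAt ℝ g (-z)) :
    twoDbar (fun w => g (-w)) z = -(twoDbar g (-z)) := by
  have h1 : HasFDerivAt (fun w : ℂ => -w) (-(ContinuousLinearMap.id ℝ ℂ)) z :=
    (hasFDerivAt_id z).neg
  have h2 := hg.hasFDerivAt.comp z h1
  have h2' : HasFDerivAt (fun w => g (-w)) ((fderiv ℝ g (-z)).comp (-ContinuousLinearMap.id ℝ ℂ)) z := h2
  unfold twoDbar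
  rw [h2'.fderiv]
  simp
  ring

/-- the symmetry 𝓔 v(z) = (−u₂(−z), u₁(−z)) sends eigenfunctions of
`D_B(α)` with eigenvalue `−k` to eigenfunctions with eigenvalue `k`. -/
theorem stmt0 (U : ℂ → ℂ) (hUpot : IsPotential U) (α B k : ℂ)
    (u : ℂ → ℂ × ℂ) (hu : ContDiff ℝ (⊤ : ℕ∞) u) (hune : ∃ z, u z ≠ 0)
    (hubc : BC u) (hueq : ∀ z : ℂ, DB U α B u z + k • u z = 0)
    (v : ℂ → ℂ × ℂ) (hv : ∀ z : ℂ, v z = (-(u (-z)).2, (u (-z)).1)) :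
    ContDiff ℝ (⊤ : ℕ∞) v ∧ (∃ z, v z ≠ 0) ∧ BC v ∧
      ∀ z : ℂ, DB U α B v z - k • v z = 0 := by
  have hud := hu.differentiable (by simp)
  have hvfun : v = fun z => (-(u (-z)).2, (u (-z)).1) := funext hv
  have hnegLam : ∀ γ ∈ Lam, -γ ∈ Lam := by
    rintro γ ⟨m, n, rfl⟩
    exact ⟨-m, -n, by push_cast; ring⟩
  have hpair : ∀ γ : ℂ, pairing (-γ) Kpt = -pairing γ Kpt := by
    intro γ; unfold pairing; simp
  refine ⟨?_, ?_, ?_, ?_⟩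
  · rw [hvfun]
    exact ((hu.comp contDiff_neg).snd.neg).prodMk (hu.comp contDiff_neg).fst
  · obtain ⟨z, hz⟩ := hune
    refine ⟨-z, ?_⟩
    rw [hv, neg_neg]
    intro h
    simp only [Prod.ext_iff, Prod.fst_zero, Prod.snd_zero, neg_eq_zero] at h
    exact hz (Prod.ext h.2 h.1)
  · intro γ hγ z
    have h := hubc (-γ) (hnegLam γ hγ) (-z)
    rw [hv, hv]
    have : -(z + γ) = -z + -γ := by ring
    rw [this, h, hpair]
    push_cast
    simp only [Prod.mk.injEq]
    constructor <;> ring_nf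
  · intro z
    have E := hueq (-z)
    rw [Prod.ext_iff] at E
    simp only [DB, Prod.fst_add, Prod.snd_add, Prod.smul_fst, Prod.smul_snd,
      Prod.fst_zero, Prod.snd_zero, smul_eq_mul, neg_neg] at E
    obtain ⟨E1, E2⟩ := E
    have hd1 : ∀ w : ℂ, twoDbar (fun w => (v w).1) w = twoDbar (fun w => (u w).2) (-w) := by
      intro w
      have : (fun w => (v w).1) = fun w => -((fun t => (u t).2) (-w)) := by
        funext t; rw [hv]
      rw [this, twoDbar_neg, twoDbar_comp_neg _ w ((hud (-w)).snd), neg_neg]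
    have hd2 : ∀ w : ℂ, twoDbar (fun w => (v w).2) w = -(twoDbar (fun w => (u w).1) (-w)) := by
      intro w
      have : (fun w => (v w).2) = fun w => ((fun t => (u t).1) (-w)) := by
        funext t; rw [hv]
      rw [this, twoDbar_comp_neg _ w ((hud (-w)).fst)]
    rw [Prod.ext_iff]
    simp only [DB, hd1 z, hd2 z, hv z, Prod.fst_sub, Prod.snd_sub, Prod.smul_fst,
      Prod.smul_snd, Prod.fst_zero, Prod.snd_zero, smul_eq_mul, neg_neg]
    constructor
    · linear_combination E2
    · linear_combination -E1
end
end

section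
/- Let U, D_B(α) and the L²₀ boundary condition be as in the context. Fix α, B, k ∈ ℂ. If u : ℂ → ℂ² is smooth, not identically zero, satisfies the L²₀ boundary condition, and D_B(α)u = k·u, then w(z) := u(ωz) is smooth, not identically zero, satisfies the L²₀ boundary condition, and D_{ω̄B}(α)w = ω̄k·w, where ω̄ = conj(ω). (Hence the spectrum of D_{ωB}(α) on L²₀ equals ω times the spectrum of D_B(α).) -/
noncomputable section

open Complex ComplexConjugate

lemma omega_arg' : (2 * (Real.pi:ℂ) * Complex.I / 3) = ((2*Real.pi/3 : ℝ) : ℂ) * Complex.I := by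
  push_cast; ring

lemma omega_re' : ω.re = -(1/2) := by
  rw [ω, omega_arg', Complex.exp_ofReal_mul_I_re,
    show (2 * Real.pi / 3) = Real.pi - Real.pi / 3 by ring, Real.cos_pi_sub,
    Real.cos_pi_div_three]

lemma omega_im' : ω.im = Real.sqrt 3 / 2 := by
  rw [ω, omega_arg', Complex.exp_ofReal_mul_I_im,
    show (2 * Real.pi / 3) = Real.pi - Real.pi / 3 by ring, Real.sin_pi_sub,
    Real.sin_pi_div_three]

lemma conj_omega_mul' : (starRingEnd ℂ) ω * ω = 1 := by
  have h3 : Real.sqrt 3 * Real.sqrt 3 = 3 := Real.mul_self_sqrt (by norm_num)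
  have hn : Complex.normSq ω = 1 := by
    rw [Complex.normSq_apply, omega_re', omega_im']; nlinarith [h3]
  rw [mul_comm, Complex.mul_conj, hn, Complex.ofReal_one]

lemma omega_sq' : ω * ω = -1 - ω := by
  have h3 : Real.sqrt 3 * Real.sqrt 3 = 3 := Real.mul_self_sqrt (by norm_num)
  apply Complex.ext <;>
    simp [Complex.mul_re, Complex.mul_im, omega_re', omega_im'] <;> nlinarith [h3]

lemma twoDbar_comp' (f : ℂ → ℂ) (z : ℂ) (hf : DifferentiableAt ℝ f (ω * z)) :
    twoDbar (fun s => f (ω * s)) z = (starRingEnd ℂ) ω * twoDbar f (ω * z) := by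
  have hL : HasFDerivAt (fun s : ℂ => ω * s) (ContinuousLinearMap.mul ℝ ℂ ω) z :=
    (ContinuousLinearMap.mul ℝ ℂ ω).hasFDerivAt
  have hcomp : HasFDerivAt (fun s => f (ω * s))
      ((fderiv ℝ f (ω * z)).comp (ContinuousLinearMap.mul ℝ ℂ ω)) z :=
    (hf.hasFDerivAt).comp z hL
  rw [twoDbar, twoDbar, hcomp.fderiv]
  set D := fderiv ℝ f (ω * z) with hD
  have e1 : D (ω * 1) = ω.re • D 1 + ω.im • D Complex.I := by
    rw [← map_smul, ← map_smul, ← map_add]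
    congr 1
    apply Complex.ext <;> simp
  have e2 : D (ω * Complex.I) = (-ω.im) • D 1 + ω.re • D Complex.I := by
    rw [← map_smul, ← map_smul, ← map_add]
    congr 1
    apply Complex.ext <;> simp
  simp only [ContinuousLinearMap.comp_apply, ContinuousLinearMap.mul_apply', e1, e2]
  have hconj : (starRingEnd ℂ) ω = (ω.re : ℂ) - (ω.im : ℂ) * Complex.I := by
    apply Complex.ext <;> simp
  rw [hconj]
  simp only [Complex.real_smul, neg_smul]
  linear_combination (-(ω.im:ℂ) * Complex.I * D Complex.I) * Complex.I_sq

lemma Kpt_eq' : Kpt = ((4 * Real.pi / 3 : ℝ) : ℂ) := by rw [Kpt]; push_cast; ring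

lemma pairing_Kpt' (z : ℂ) : pairing z Kpt = z.re * (4 * Real.pi / 3) := by
  rw [pairing, Kpt_eq', Complex.conj_ofReal]
  simp [Complex.mul_re]

/-- the rotation symmetry w(z) = u(ωz) conjugates `D_B(α)` with eigenvalue `k`
to `D_{ω̄B}(α)` with eigenvalue `ω̄k`. -/
theorem stmt1 (U : ℂ → ℂ) (hUpot : IsPotential U) (α B k : ℂ)
    (u : ℂ → ℂ × ℂ) (hu : ContDiff ℝ (⊤ : ℕ∞) u) (hune : ∃ z, u z ≠ 0)
    (hubc : BC u) (hueq : ∀ z : ℂ, DB U α B u z = k • u z)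
    (w : ℂ → ℂ × ℂ) (hw : ∀ z : ℂ, w z = u (ω * z)) :
    ContDiff ℝ (⊤ : ℕ∞) w ∧ (∃ z, w z ≠ 0) ∧ BC w ∧
      ∀ z : ℂ, DB U α (conj ω * B) w z = (conj ω * k) • w z := by
  obtain ⟨hUc, hUper, hUrot, hUsym⟩ := hUpot
  refine ⟨?_, ?_, ?_, ?_⟩
  · have hwdef : w = fun z => u (ω * z) := funext hw
    rw [hwdef]
    exact hu.comp (contDiff_const.mul contDiff_id)
  · obtain ⟨z, hz⟩ := hune
    refine ⟨(starRingEnd ℂ) ω * z, ?_⟩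
    rw [hw, show ω * ((starRingEnd ℂ) ω * z) = z by
      rw [← mul_assoc, mul_comm ω, conj_omega_mul', one_mul]]
    exact hz
  · intro γ hγ z
    obtain ⟨m, n, rfl⟩ := hγ
    have hmem : ω * ((m:ℂ) + (n:ℂ) * ω) ∈ Lam :=
      ⟨-n, m - n, by push_cast; linear_combination (n:ℂ) * omega_sq'⟩
    have h3 : Real.sqrt 3 * Real.sqrt 3 = 3 := Real.mul_self_sqrt (by norm_num)
    have hp : pairing (ω * ((m:ℂ) + (n:ℂ) * ω)) Kpt
        = pairing ((m:ℂ) + (n:ℂ) * ω) Kpt - 2 * Real.pi * m := by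
      rw [pairing_Kpt', pairing_Kpt']
      have hre1 : (ω * ((m:ℂ) + (n:ℂ) * ω)).re = -(m:ℝ)/2 - (n:ℝ)/2 := by
        simp [Complex.mul_re, Complex.add_re, Complex.add_im, Complex.mul_im,
          omega_re', omega_im']
        linear_combination (-(n:ℝ)/4) * h3
      have hre2 : ((m:ℂ) + (n:ℂ) * ω).re = (m:ℝ) - (n:ℝ)/2 := by
        simp [Complex.add_re, Complex.mul_re, omega_re', omega_im']
        ring
      rw [hre1, hre2]; ring
    have he1 : Complex.exp (-Complex.I * (pairing (ω * ((m:ℂ) + (n:ℂ) * ω)) Kpt : ℂ))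
        = Complex.exp (-Complex.I * (pairing ((m:ℂ) + (n:ℂ) * ω) Kpt : ℂ)) := by
      rw [hp, show (-Complex.I * ((pairing ((m:ℂ) + (n:ℂ) * ω) Kpt
          - 2 * Real.pi * m : ℝ) : ℂ))
        = -Complex.I * (pairing ((m:ℂ) + (n:ℂ) * ω) Kpt : ℂ)
          + (m : ℤ) * (2 * (Real.pi : ℂ) * Complex.I) by push_cast; ring,
        Complex.exp_add, Complex.exp_int_mul_two_pi_mul_I, mul_one]
    have he2 : Complex.exp (Complex.I * (pairing (ω * ((m:ℂ) + (n:ℂ) * ω)) Kpt : ℂ))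
        = Complex.exp (Complex.I * (pairing ((m:ℂ) + (n:ℂ) * ω) Kpt : ℂ)) := by
      rw [hp, show (Complex.I * ((pairing ((m:ℂ) + (n:ℂ) * ω) Kpt
          - 2 * Real.pi * m : ℝ) : ℂ))
        = Complex.I * (pairing ((m:ℂ) + (n:ℂ) * ω) Kpt : ℂ)
          + (-m : ℤ) * (2 * (Real.pi : ℂ) * Complex.I) by push_cast; ring,
        Complex.exp_add, Complex.exp_int_mul_two_pi_mul_I, mul_one]
    rw [hw, hw, mul_add, hubc _ hmem (ω * z), he1, he2]
  · intro z
    have hu1 : DifferentiableAt ℝ (fun t => (u t).1) (ω * z) :=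
      ((hu.differentiable (by simp)) (ω * z)).fst
    have hu2 : DifferentiableAt ℝ (fun t => (u t).2) (ω * z) :=
      ((hu.differentiable (by simp)) (ω * z)).snd
    have hc1 : (fun s => (w s).1) = fun s => (fun t => (u t).1) (ω * s) := by
      funext s; rw [hw]
    have hc2 : (fun s => (w s).2) = fun s => (fun t => (u t).2) (ω * s) := by
      funext s; rw [hw]
    have h1 := congrArg Prod.fst (hueq (ω * z))
    have h2 := congrArg Prod.snd (hueq (ω * z))
    simp only [DB, Prod.smul_fst, Prod.smul_snd, smul_eq_mul] at h1 h2
    have hUz : U z = (starRingEnd ℂ) ω * U (ω * z) := by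
      rw [hUrot, ← mul_assoc, conj_omega_mul', one_mul]
    have hUnz : U (-z) = (starRingEnd ℂ) ω * U (-(ω * z)) := by
      have h := hUrot (-z)
      rw [mul_neg] at h
      rw [h, ← mul_assoc, conj_omega_mul', one_mul]
    rw [Prod.ext_iff]
    simp only [DB, Prod.smul_fst, Prod.smul_snd, smul_eq_mul]
    constructor
    · rw [hc1, twoDbar_comp' _ _ hu1, hw, hUz]
      linear_combination (starRingEnd ℂ) ω * h1
    · rw [hc2, twoDbar_comp' _ _ hu2, hw, hUnz]
      linear_combination (starRingEnd ℂ) ω * h2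
end
end

section
/- Let U, D_B(α) and the L²₀ boundary condition be as in the context. Fix α, B, k ∈ ℂ. If u : ℂ → ℂ² is smooth, not identically zero, satisfies the L²₀ boundary condition, and D_B(α)u = k·u, then v(z) := conj(u(−conj z)) (componentwise complex conjugation) is smooth, not identically zero, satisfies the L²₀ boundary condition, and D_{conj B}(−conj α)v = conj(k)·v. (Together with the symmetries α ↦ −α and k ↦ −k, this gives that the spectrum of D_{conj B}(conj α) on L²₀ is the complex conjugate of the spectrum of D_B(α).) -/
noncomputable section

open Complex ComplexConjugate

lemma conj_omega : conj ω = -1 - ω := by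
  have hω : ω = Complex.exp (((2*Real.pi/3 : ℝ) : ℂ) * Complex.I) := by
    rw [ω]; push_cast; ring_nf
  have hc : Real.cos (2*Real.pi/3) = -(1/2) := by
    have h : (2*Real.pi/3 : ℝ) = Real.pi - Real.pi/3 := by ring
    rw [h, Real.cos_pi_sub, Real.cos_pi_div_three]
  rw [hω, Complex.exp_mul_I, ← Complex.ofReal_cos, ← Complex.ofReal_sin]
  simp only [map_add, map_mul, Complex.conj_I, Complex.conj_ofReal]
  rw [hc]
  push_cast
  ring

lemma lam_neg_conj {γ : ℂ} (h : γ ∈ Lam) : -(conj γ) ∈ Lam := by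
  obtain ⟨m, n, rfl⟩ := h
  refine ⟨n - m, n, ?_⟩
  simp only [map_add, map_mul, conj_omega, map_intCast]
  push_cast
  ring

lemma pairing_negConj (γ : ℂ) : pairing (-(conj γ)) Kpt = - pairing γ Kpt := by
  have hK : Kpt = ((4*Real.pi/3 : ℝ) : ℂ) := by rw [Kpt]; push_cast; ring
  show ((-(conj γ)) * conj Kpt).re = -((γ * conj Kpt).re)
  rw [hK, Complex.conj_ofReal]
  simp [Complex.mul_re]

lemma twoDbar_flip (f : ℂ → ℂ) (hf : Differentiable ℝ f) (z : ℂ) :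
    twoDbar (fun w => conj (f (-(conj w)))) z = conj (twoDbar f (-(conj z))) := by
  set w := -(conj z) with hw
  set D := fderiv ℝ f w with hD
  set M : ℂ →L[ℝ] ℂ := -((Complex.conjCLE : ℂ ≃L[ℝ] ℂ) : ℂ →L[ℝ] ℂ) with hM
  have hMd : HasFDerivAt (fun w : ℂ => -(conj w)) M z := by
    refine (M.hasFDerivAt (x := z)).congr_of_eventuallyEq
      (Filter.Eventually.of_forall fun y => ?_)
    simp [hM]
  have hfd : HasFDerivAt f D w := (hf w).hasFDerivAt
  have hcomp : HasFDerivAt (fun y => f (-(conj y))) (D ∘L M) z := hfd.comp z hMd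
  have hC : HasFDerivAt (fun x : ℂ => conj x)
      ((Complex.conjCLE : ℂ ≃L[ℝ] ℂ) : ℂ →L[ℝ] ℂ) (f (-(conj z))) :=
    Complex.conjCLE.hasFDerivAt
  have hfull : HasFDerivAt (fun y => conj (f (-(conj y))))
      (((Complex.conjCLE : ℂ ≃L[ℝ] ℂ) : ℂ →L[ℝ] ℂ) ∘L (D ∘L M)) z := hC.comp z hcomp
  rw [twoDbar, twoDbar, hfull.fderiv]
  simp only [ContinuousLinearMap.comp_apply, hM, ContinuousLinearMap.neg_apply,
    ContinuousLinearEquiv.coe_coe, Complex.conjCLE_apply, map_one, Complex.conj_I,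
    neg_neg, map_neg]
  simp only [map_mul, map_add, map_neg, Complex.conj_I]
  ring

/-- the antilinear symmetry v(z) = conj (u (−conj z)) conjugates `D_B(α)` with
eigenvalue `k` to `D_{conj B}(−conj α)` with eigenvalue `conj k`. -/
theorem stmt2 (U : ℂ → ℂ) (hUpot : IsPotential U) (α B k : ℂ)
    (u : ℂ → ℂ × ℂ) (hu : ContDiff ℝ (⊤ : ℕ∞) u) (hune : ∃ z, u z ≠ 0)
    (hubc : BC u) (hueq : ∀ z : ℂ, DB U α B u z = k • u z)
    (v : ℂ → ℂ × ℂ)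
    (hv : ∀ z : ℂ, v z = (conj ((u (-(conj z))).1), conj ((u (-(conj z))).2))) :
    ContDiff ℝ (⊤ : ℕ∞) v ∧ (∃ z, v z ≠ 0) ∧ BC v ∧
      ∀ z : ℂ, DB U (-(conj α)) (conj B) v z = (conj k) • v z := by

  obtain ⟨hUsm, hUper, hUrot, hUsym⟩ := hUpot
  have hconj : ContDiff ℝ (⊤ : ℕ∞) (fun x : ℂ => conj x) :=
    (Complex.conjCLE : ℂ ≃L[ℝ] ℂ).contDiff
  have hneg : ContDiff ℝ (⊤ : ℕ∞) (fun z : ℂ => -(conj z)) := hconj.neg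
  have hveq : v = fun z => (conj ((u (-(conj z))).1), conj ((u (-(conj z))).2)) :=
    funext hv
  have hu1 : ContDiff ℝ (⊤ : ℕ∞) (fun z => (u z).1) := contDiff_fst.comp hu
  have hu2 : ContDiff ℝ (⊤ : ℕ∞) (fun z => (u z).2) := contDiff_snd.comp hu
  refine ⟨?_, ?_, ?_, ?_⟩
  · rw [hveq]
    exact ((hconj.comp (hu1.comp hneg)).prodMk (hconj.comp (hu2.comp hneg)))
  · obtain ⟨z₀, hz₀⟩ := hune
    refine ⟨-(conj z₀), ?_⟩
    rw [hv]
    have h0 : -(conj (-(conj z₀))) = z₀ := by simp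
    rw [h0]
    intro hc
    apply hz₀
    have h1 : conj ((u z₀).1) = 0 := congrArg Prod.fst hc
    have h2 : conj ((u z₀).2) = 0 := congrArg Prod.snd hc
    rw [map_eq_zero] at h1 h2
    exact Prod.ext h1 h2
  · intro γ hγ z
    rw [hv, hv]
    have hγ' := lam_neg_conj hγ
    have hcz : -(conj (z + γ)) = -(conj z) + -(conj γ) := by rw [map_add]; ring
    rw [hcz, hubc _ hγ' (-(conj z))]
    simp only [pairing_negConj, Prod.mk.injEq]
    constructor <;>
    · rw [map_mul, ← Complex.exp_conj]
      simp only [map_mul, map_neg, Complex.conj_I, Complex.conj_ofReal,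
        Complex.ofReal_neg]
      ring_nf
  · intro z
    set w := -(conj z) with hw
    have hk1 := congrArg Prod.fst (hueq w)
    have hk2 := congrArg Prod.snd (hueq w)
    simp only [DB, Prod.smul_fst, Prod.smul_snd, smul_eq_mul] at hk1 hk2
    have hck1 := congrArg conj hk1
    have hck2 := congrArg conj hk2
    simp only [map_add, map_sub, map_mul] at hck1 hck2
    have hUz : U z = -(conj (U w)) := by
      have h := hUsym (-z)
      rw [map_neg, neg_neg] at h
      linear_combination h
    have hUnz : U (-z) = -(conj (U (-w))) := by
      have h := hUsym z
      have h2 : conj z = -w := by rw [hw]; ring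
      rw [h2] at h
      linear_combination h
    have e1 : twoDbar (fun y => (v y).1) z = conj (twoDbar (fun y => (u y).1) w) := by
      rw [show (fun y => (v y).1) = fun y => conj ((u (-(conj y))).1) from
        funext fun y => by rw [hv]]
      exact twoDbar_flip _ (hu1.differentiable (by simp)) z
    have e2 : twoDbar (fun y => (v y).2) z = conj (twoDbar (fun y => (u y).2) w) := by
      rw [show (fun y => (v y).2) = fun y => conj ((u (-(conj y))).2) from
        funext fun y => by rw [hv]]
      exact twoDbar_flip _ (hu2.differentiable (by simp)) z
    have hvz := hv z
    have hv1 : (v z).1 = conj ((u w).1) := by rw [hvz]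
    have hv2 : (v z).2 = conj ((u w).2) := by rw [hvz]
    refine Prod.ext ?_ ?_
    · show twoDbar (fun y => (v y).1) z + (-(conj α)) * U z * (v z).2
        + conj B * (v z).1 = (conj k • v z).1
      rw [e1, hUz, hv1, hv2, Prod.smul_fst, smul_eq_mul, hv1]
      linear_combination hck1
    · show (-(conj α)) * U (-z) * (v z).1 + twoDbar (fun y => (v y).2) z
        - conj B * (v z).2 = (conj k • v z).2
      rw [e2, hUnz, hv1, hv2, Prod.smul_snd, smul_eq_mul, hv2]
      linear_combination hck2
end
end

section
/- Define θ(z) := −∑_{n∈ℤ} exp(πi(n + 1/2)²ω + 2πi(n + 1/2)(z + 1/2)) where ω = exp(2πi/3), and θ₂(z) := θ(z + 1/2). Then for all z, u ∈ ℂ: θ(z + u)·θ(z − u)·θ₂(0)² = θ(z)²·θ₂(u)² − θ₂(z)²·θ(u)². -/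
noncomputable section

open Complex ComplexConjugate

/-- The Jacobi theta function θ(z) = θ₁(z|ω) = −θ_{1/2,1/2}(z|ω). -/
def θf (z : ℂ) : ℂ :=
  -∑' n : ℤ, Complex.exp ((Real.pi : ℂ) * Complex.I * ((n : ℂ) + 1/2)^2 * ω
      + 2 * (Real.pi : ℂ) * Complex.I * ((n : ℂ) + 1/2) * (z + 1/2))

/-- θ₂(z) = θ(z + 1/2). -/
def θ2 (z : ℂ) : ℂ := θf (z + 1/2)

/-- General theta-type term. -/
def Tm (t r w : ℂ) (n : ℤ) : ℂ :=
  Complex.exp ((Real.pi : ℂ) * Complex.I * ((n : ℂ) + r)^2 * t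
      + 2 * (Real.pi : ℂ) * Complex.I * ((n : ℂ) + r) * w)

lemma hω_im : 0 < ω.im := by
  have h : (2 * (Real.pi : ℂ) * Complex.I / 3) = ((2 * Real.pi / 3 : ℝ) : ℂ) * Complex.I := by
    push_cast; ring
  rw [ω, h, Complex.exp_im]
  simp only [Complex.mul_re, Complex.mul_im, Complex.I_re, Complex.I_im, Complex.ofReal_re,
    Complex.ofReal_im, mul_zero, mul_one, zero_mul, sub_zero, zero_add, add_zero, sub_self,
    Real.exp_zero, one_mul]
  have hπ := Real.pi_pos
  apply Real.sin_pos_of_pos_of_lt_pi <;> nlinarith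

lemma h2ω_im : 0 < (2 * ω).im := by
  have := hω_im
  simp only [Complex.mul_im]
  norm_num
  nlinarith

lemma summable_norm_Tm (t : ℂ) (ht : 0 < t.im) (r w : ℂ) :
    Summable fun n : ℤ => ‖Tm t r w n‖ := by
  have key : ∀ n : ℤ, Tm t r w n
      = Complex.exp ((Real.pi : ℂ) * Complex.I * r^2 * t + 2 * (Real.pi : ℂ) * Complex.I * r * w)
        * jacobiTheta₂_term n (r * t + w) t := by
    intro n
    rw [Tm, jacobiTheta₂_term, ← Complex.exp_add]
    congr 1
    ring
  simp only [key, norm_mul]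
  apply Summable.mul_left
  refine Summable.of_nonneg_of_le (fun n => norm_nonneg _) ?_
    (summable_pow_mul_jacobiTheta₂_term_bound |(r * t + w).im| ht 0)
  simpa only [pow_zero, one_mul] using norm_jacobiTheta₂_term_le ht le_rfl le_rfl

lemma summable_Tm (t : ℂ) (ht : 0 < t.im) (r w : ℂ) : Summable (Tm t r w) :=
  (summable_norm_Tm t ht r w).of_norm

/-- E-part: theta-3 like series in nome 2ω. -/
def Ef (w : ℂ) : ℂ := ∑' k : ℤ, Tm (2 * ω) 0 w k

/-- O-part: theta-2 like series in nome 2ω. -/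
def Og (w : ℂ) : ℂ := ∑' k : ℤ, Tm (2 * ω) (1/2) w k

lemma exp_aux_pos (m : ℤ) {A B : ℂ} (h : A = B + (m : ℂ) * (2 * (Real.pi : ℂ) * Complex.I)) :
    Complex.exp A = Complex.exp B := by
  rw [h, Complex.exp_add, Complex.exp_int_mul_two_pi_mul_I, mul_one]

lemma exp_aux_neg (m : ℤ) {A B : ℂ}
    (h : A = B + ((m : ℂ) * (2 * (Real.pi : ℂ) * Complex.I) + (Real.pi : ℂ) * Complex.I)) :
    Complex.exp A = -Complex.exp B := by
  rw [h, Complex.exp_add, Complex.exp_add, Complex.exp_int_mul_two_pi_mul_I, one_mul,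
    Complex.exp_pi_mul_I]
  ring

lemma term1 (x y : ℂ) (j k : ℤ) :
    Tm ω (1/2) (x + 1/2) (j + k) * Tm ω (1/2) (y + 1/2) (j - k)
      = -(Tm (2 * ω) (1/2) (x + y) j * Tm (2 * ω) 0 (x - y) k) := by
  simp only [Tm, ← Complex.exp_add]
  apply exp_aux_neg j
  push_cast
  ring

lemma term2 (x y : ℂ) (j k : ℤ) :
    Tm ω (1/2) (x + 1/2) (j + k) * Tm ω (1/2) (y + 1/2) (j - k - 1)
      = Tm (2 * ω) 0 (x + y) j * Tm (2 * ω) (1/2) (x - y) k := by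
  simp only [Tm, ← Complex.exp_add]
  apply exp_aux_pos j
  push_cast
  ring

lemma term3 (x y : ℂ) (j k : ℤ) :
    Tm ω (1/2) (x + 1) (j + k) * Tm ω (1/2) (y + 1) (j - k)
      = Tm (2 * ω) (1/2) (x + y) j * Tm (2 * ω) 0 (x - y) k := by
  simp only [Tm, ← Complex.exp_add]
  apply exp_aux_pos (2 * j + 1)
  push_cast
  ring

lemma term4 (x y : ℂ) (j k : ℤ) :
    Tm ω (1/2) (x + 1) (j + k) * Tm ω (1/2) (y + 1) (j - k - 1)
      = Tm (2 * ω) 0 (x + y) j * Tm (2 * ω) (1/2) (x - y) k := by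
  simp only [Tm, ← Complex.exp_add]
  apply exp_aux_pos (2 * j)
  push_cast
  ring

/-- The re-indexing bijection: `(b, j, k)` goes to `(j+k, j-k)` if `b = false`
(pairs with even difference) and to `(j+k, j-k-1)` if `b = true`. -/
def gfun : Bool × ℤ × ℤ → ℤ × ℤ
  | (false, j, k) => (j + k, j - k)
  | (true, j, k) => (j + k, j - k - 1)

def Gmap : Bool × ℤ × ℤ ≃ ℤ × ℤ :=
  Equiv.ofBijective gfun (by
  constructor
  · rintro ⟨b, j, k⟩ ⟨b', j', k'⟩ h
    cases b <;> cases b' <;>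
      simp only [gfun, Prod.mk.injEq, Bool.false_eq_true, Bool.true_eq_false, false_and,
        true_and] at h ⊢ <;> omega
  · rintro ⟨n, m⟩
    rcases Int.even_or_odd (n - m) with ⟨k, hk⟩ | ⟨k, hk⟩
    · exact ⟨(false, n - k, k), by simp only [gfun, Prod.mk.injEq]; omega⟩
    · exact ⟨(true, n - k, k), by simp only [gfun, Prod.mk.injEq]; omega⟩)

lemma Gmap_false (j k : ℤ) : Gmap (false, j, k) = (j + k, j - k) := rfl

lemma Gmap_true (j k : ℤ) : Gmap (true, j, k) = (j + k, j - k - 1) := rfl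

lemma θf_eq (x : ℂ) : θf x = -∑' n : ℤ, Tm ω (1/2) (x + 1/2) n := rfl

lemma θ2_eq (x : ℂ) : θ2 x = -∑' n : ℤ, Tm ω (1/2) (x + 1) n := by
  rw [θ2, θf_eq, show x + 1/2 + 1/2 = x + 1 by ring]

set_option maxHeartbeats 1000000 in
lemma key1 (x y : ℂ) :
    θf x * θf y = Ef (x + y) * Og (x - y) - Og (x + y) * Ef (x - y) := by
  have hs1 := summable_norm_Tm ω hω_im (1/2) (x + 1/2)
  have hs2 := summable_norm_Tm ω hω_im (1/2) (y + 1/2)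
  rw [θf_eq, θf_eq, neg_mul_neg, tsum_mul_tsum_of_summable_norm hs1 hs2]
  set T : ℤ × ℤ → ℂ :=
    fun p => Tm ω (1/2) (x + 1/2) p.1 * Tm ω (1/2) (y + 1/2) p.2 with hT_def
  have hT : Summable T := summable_mul_of_summable_norm hs1 hs2
  rw [← Gmap.tsum_eq T]
  have hGf : ∀ p : ℤ × ℤ, T (Gmap (false, p))
      = -(Tm (2 * ω) (1/2) (x + y) p.1 * Tm (2 * ω) 0 (x - y) p.2) := by
    rintro ⟨j, k⟩
    rw [Gmap_false]
    exact term1 x y j k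
  have hGt : ∀ p : ℤ × ℤ, T (Gmap (true, p))
      = Tm (2 * ω) 0 (x + y) p.1 * Tm (2 * ω) (1/2) (x - y) p.2 := by
    rintro ⟨j, k⟩
    rw [Gmap_true]
    exact term2 x y j k
  have hTG : Summable fun q : Bool × ℤ × ℤ => T (Gmap q) := Gmap.summable_iff.mpr hT
  have hfib : ∀ b : Bool, Summable fun p : ℤ × ℤ => T (Gmap (b, p)) := by
    intro b
    cases b
    · exact Summable.congr
        ((summable_mul_of_summable_norm (summable_norm_Tm _ h2ω_im (1/2) (x + y))
          (summable_norm_Tm _ h2ω_im 0 (x - y))).neg) (fun p => (hGf p).symm)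
    · exact Summable.congr
        (summable_mul_of_summable_norm (summable_norm_Tm _ h2ω_im 0 (x + y))
          (summable_norm_Tm _ h2ω_im (1/2) (x - y))) (fun p => (hGt p).symm)
  rw [Summable.tsum_prod' hTG hfib, tsum_bool]
  have hfalse : ∑' p : ℤ × ℤ, T (Gmap (false, p)) = -(Og (x + y) * Ef (x - y)) := by
    rw [tsum_congr hGf, tsum_neg,
      ← tsum_mul_tsum_of_summable_norm (summable_norm_Tm _ h2ω_im (1/2) (x + y))
        (summable_norm_Tm _ h2ω_im 0 (x - y))]
    rfl
  have htrue : ∑' p : ℤ × ℤ, T (Gmap (true, p)) = Ef (x + y) * Og (x - y) := by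
    rw [tsum_congr hGt,
      ← tsum_mul_tsum_of_summable_norm (summable_norm_Tm _ h2ω_im 0 (x + y))
        (summable_norm_Tm _ h2ω_im (1/2) (x - y))]
    rfl
  rw [hfalse, htrue]
  ring

set_option maxHeartbeats 1000000 in
lemma key2 (x y : ℂ) :
    θ2 x * θ2 y = Ef (x + y) * Og (x - y) + Og (x + y) * Ef (x - y) := by
  have hs1 := summable_norm_Tm ω hω_im (1/2) (x + 1)
  have hs2 := summable_norm_Tm ω hω_im (1/2) (y + 1)
  rw [θ2_eq, θ2_eq, neg_mul_neg, tsum_mul_tsum_of_summable_norm hs1 hs2]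
  set T : ℤ × ℤ → ℂ :=
    fun p => Tm ω (1/2) (x + 1) p.1 * Tm ω (1/2) (y + 1) p.2 with hT_def
  have hT : Summable T := summable_mul_of_summable_norm hs1 hs2
  rw [← Gmap.tsum_eq T]
  have hGf : ∀ p : ℤ × ℤ, T (Gmap (false, p))
      = Tm (2 * ω) (1/2) (x + y) p.1 * Tm (2 * ω) 0 (x - y) p.2 := by
    rintro ⟨j, k⟩
    rw [Gmap_false]
    exact term3 x y j k
  have hGt : ∀ p : ℤ × ℤ, T (Gmap (true, p))
      = Tm (2 * ω) 0 (x + y) p.1 * Tm (2 * ω) (1/2) (x - y) p.2 := by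
    rintro ⟨j, k⟩
    rw [Gmap_true]
    exact term4 x y j k
  have hTG : Summable fun q : Bool × ℤ × ℤ => T (Gmap q) := Gmap.summable_iff.mpr hT
  have hfib : ∀ b : Bool, Summable fun p : ℤ × ℤ => T (Gmap (b, p)) := by
    intro b
    cases b
    · exact Summable.congr
        (summable_mul_of_summable_norm (summable_norm_Tm _ h2ω_im (1/2) (x + y))
          (summable_norm_Tm _ h2ω_im 0 (x - y))) (fun p => (hGf p).symm)
    · exact Summable.congr
        (summable_mul_of_summable_norm (summable_norm_Tm _ h2ω_im 0 (x + y))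
          (summable_norm_Tm _ h2ω_im (1/2) (x - y))) (fun p => (hGt p).symm)
  rw [Summable.tsum_prod' hTG hfib, tsum_bool]
  have hfalse : ∑' p : ℤ × ℤ, T (Gmap (false, p)) = Og (x + y) * Ef (x - y) := by
    rw [tsum_congr hGf,
      ← tsum_mul_tsum_of_summable_norm (summable_norm_Tm _ h2ω_im (1/2) (x + y))
        (summable_norm_Tm _ h2ω_im 0 (x - y))]
    rfl
  have htrue : ∑' p : ℤ × ℤ, T (Gmap (true, p)) = Ef (x + y) * Og (x - y) := by
    rw [tsum_congr hGt,
      ← tsum_mul_tsum_of_summable_norm (summable_norm_Tm _ h2ω_im 0 (x + y))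
        (summable_norm_Tm _ h2ω_im (1/2) (x - y))]
    rfl
  rw [hfalse, htrue]
  ring

/-- the theta identity
θ(z+u)θ(z−u)θ₂(0)² = θ(z)²θ₂(u)² − θ₂(z)²θ(u)². -/
theorem stmt10 :
    ∀ z u : ℂ, θf (z + u) * θf (z - u) * (θ2 0) ^ 2 =
      (θf z) ^ 2 * (θ2 u) ^ 2 - (θ2 z) ^ 2 * (θf u) ^ 2 := by
  intro z u
  have e1 := key1 (z + u) (z - u)
  rw [show (z + u) + (z - u) = z + z by ring, show (z + u) - (z - u) = u + u by ring] at e1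
  have e2 := key2 0 0
  rw [show (0 : ℂ) + 0 = 0 by ring, show (0 : ℂ) - 0 = 0 by ring] at e2
  have e3 := key1 z z
  rw [show z - z = (0 : ℂ) by ring] at e3
  have e4 := key2 u u
  rw [show u - u = (0 : ℂ) by ring] at e4
  have e5 := key2 z z
  rw [show z - z = (0 : ℂ) by ring] at e5
  have e6 := key1 u u
  rw [show u - u = (0 : ℂ) by ring] at e6
  simp only [sq]
  rw [e1, e2, e3, e4, e5, e6]
  ring
end
end
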